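/- The function C_G(ρ,σ) = √(1 - G(ρ,σ)) is a metric on the set of density matrices, where G is the superfidelity. In particular it satisfies the triangle inequality C_G(ρ,τ) ≤ C_G(ρ,σ) + C_G(σ,τ). -/

import Mathlib

open Matrix ComplexOrder

noncomputable def sG {N : ℕ} (ρ σ : Matrix (Fin N) (Fin N) ℂ) : ℝ :=
  (trace (ρ * σ)).re +
    Real.sqrt (1 - (trace (ρ * ρ)).re) * Real.sqrt (1 - (trace (σ * σ)).re)

noncomputable def CG {N : ℕ} (ρ σ : Matrix (Fin N) (Fin N) ℂ) : ℝ :=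
  Real.sqrt (1 - sG ρ σ)

lemma CG_trace_spec {N : ℕ} {ρ : Matrix (Fin N) (Fin N) ℂ} (h : ρ.PosSemidef) :
    trace ρ = ∑ i, (h.1.eigenvalues i : ℂ) ∧
    trace (ρ * ρ) = ∑ i, ((h.1.eigenvalues i : ℂ))^2 := by
  set U : Matrix (Fin N) (Fin N) ℂ := (h.1.eigenvectorUnitary : Matrix (Fin N) (Fin N) ℂ) with hUdef
  have hU : star U * U = 1 := (Matrix.mem_unitaryGroup_iff').mp h.1.eigenvectorUnitary.2
  have hs := h.1.spectral_theorem
  rw [Unitary.conjStarAlgAut_apply, ← hUdef] at hs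
  set D := diagonal (RCLike.ofReal ∘ h.1.eigenvalues : Fin N → ℂ) with hD
  constructor
  · conv_lhs => rw [hs]
    rw [trace_mul_comm, ← mul_assoc, hU, one_mul, hD, trace_diagonal]
    rfl
  · conv_lhs => rw [hs]
    rw [show (U * D * star U) * (U * D * star U) = U * (D * D) * star U by
      simp only [mul_assoc]
      rw [← mul_assoc (star U) U, hU, one_mul]]
    rw [trace_mul_comm, ← mul_assoc, hU, one_mul, hD, diagonal_mul_diagonal, trace_diagonal]
    simp [sq]

lemma CG_trace_sq_le {N : ℕ} {ρ : Matrix (Fin N) (Fin N) ℂ} (h : ρ.PosSemidef)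
    (ht : trace ρ = 1) : (trace (ρ * ρ)).re ≤ 1 := by
  obtain ⟨h1, h2⟩ := CG_trace_spec h
  have hsum : ∑ i, h.1.eigenvalues i = 1 := by
    have := ht ▸ h1
    exact_mod_cast (by exact_mod_cast this.symm : (∑ i, h.1.eigenvalues i : ℂ) = 1)
  rw [h2]
  have : ((∑ i, ((h.1.eigenvalues i : ℂ))^2)).re = ∑ i, (h.1.eigenvalues i)^2 := by
    exact_mod_cast rfl
  rw [this]
  calc ∑ i, (h.1.eigenvalues i)^2 ≤ (∑ i, h.1.eigenvalues i)^2 :=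
        Finset.sum_sq_le_sq_sum_of_nonneg (fun i _ => h.eigenvalues_nonneg i)
    _ = 1 := by rw [hsum]; norm_num

noncomputable def uvec {N : ℕ} (ρ : Matrix (Fin N) (Fin N) ℂ) :
    EuclideanSpace ℝ ((Fin N × Fin N) ⊕ ((Fin N × Fin N) ⊕ Unit)) := WithLp.toLp 2 fun i =>
  Sum.elim (fun p => (ρ p.1 p.2).re)
    (Sum.elim (fun p => (ρ p.1 p.2).im)
      (fun _ => Real.sqrt (1 - (trace (ρ * ρ)).re))) i

lemma inner_uvec {N : ℕ} {ρ σ : Matrix (Fin N) (Fin N) ℂ} (hσ : σ.IsHermitian) :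
    inner (𝕜 := ℝ) (uvec ρ) (uvec σ) = sG ρ σ := by
  have hσ' : ∀ i j, σ j i = (starRingEnd ℂ) (σ i j) := fun i j => by
    conv_lhs => rw [← hσ.eq]
    simp [conjTranspose_apply]
  have htr : (trace (ρ * σ)).re =
      ∑ i, ∑ j, ((ρ i j).re * (σ i j).re + (ρ i j).im * (σ i j).im) := by
    rw [trace]
    simp only [diag, mul_apply, Complex.re_sum]
    congr 1; ext i; congr 1; ext j
    rw [hσ' i j]
    simp [Complex.mul_re]
  simp only [uvec, PiLp.toLp_apply, PiLp.inner_apply, RCLike.inner_apply, starRingEnd_apply, star_trivial]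
  rw [Fintype.sum_sum_type, Fintype.sum_sum_type]
  simp only [Sum.elim_inl, Sum.elim_inr]
  rw [sG, htr, Fintype.sum_prod_type, Fintype.sum_prod_type]
  simp only [Finset.sum_add_distrib, Finset.univ_unique, Finset.sum_const,
    Finset.card_singleton, one_smul]
  simp only [mul_comm (σ _ _).re, mul_comm (σ _ _).im]
  ring

lemma CG_eq_norm {N : ℕ} {ρ σ : Matrix (Fin N) (Fin N) ℂ}
    (hρ : ρ.PosSemidef) (hσ : σ.PosSemidef) (tρ : trace ρ = 1) (tσ : trace σ = 1) :
    CG ρ σ = ‖uvec ρ - uvec σ‖ / Real.sqrt 2 := by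
  have hself : ∀ (τ : Matrix (Fin N) (Fin N) ℂ), τ.PosSemidef → trace τ = 1 →
      ‖uvec τ‖ ^ 2 = 1 := by
    intro τ hτ tτ
    rw [← real_inner_self_eq_norm_sq, inner_uvec hτ.1, sG,
      Real.mul_self_sqrt (by linarith [CG_trace_sq_le hτ tτ])]
    ring
  have key : ‖uvec ρ - uvec σ‖ ^ 2 = 2 - 2 * sG ρ σ := by
    rw [norm_sub_sq_real, hself ρ hρ tρ, hself σ hσ tσ, inner_uvec hσ.1]
    ring
  have h2 : (1 : ℝ) - sG ρ σ = ‖uvec ρ - uvec σ‖ ^ 2 / 2 := by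
    rw [key]; ring
  rw [CG, h2, Real.sqrt_div' _ (by positivity), Real.sqrt_sq (norm_nonneg _)]

theorem CG_is_metric {N : ℕ} :
    (∀ (ρ σ : Matrix (Fin N) (Fin N) ℂ),
      ρ.PosSemidef → σ.PosSemidef → trace ρ = 1 → trace σ = 1 →
        0 ≤ CG ρ σ) ∧
    (∀ (ρ σ : Matrix (Fin N) (Fin N) ℂ),
      ρ.PosSemidef → σ.PosSemidef → trace ρ = 1 → trace σ = 1 →
        (CG ρ σ = 0 ↔ ρ = σ)) ∧
    (∀ (ρ σ : Matrix (Fin N) (Fin N) ℂ),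
      ρ.PosSemidef → σ.PosSemidef → trace ρ = 1 → trace σ = 1 →
        CG ρ σ = CG σ ρ) ∧
    (∀ (ρ σ τ : Matrix (Fin N) (Fin N) ℂ),
      ρ.PosSemidef → σ.PosSemidef → τ.PosSemidef →
      trace ρ = 1 → trace σ = 1 → trace τ = 1 →
        CG ρ τ ≤ CG ρ σ + CG σ τ) := by
  refine ⟨fun ρ σ _ _ _ _ => Real.sqrt_nonneg _, ?_, ?_, ?_⟩
  · intro ρ σ hρ hσ tρ tσ
    rw [CG_eq_norm hρ hσ tρ tσ]
    constructor
    · intro h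
      have huv : uvec ρ = uvec σ := by
        field_simp at h
        simpa [sub_eq_zero] using h
      ext i j
      have h1 := congrArg (· (Sum.inl (i, j))) huv
      have h2 := congrArg (· (Sum.inr (Sum.inl (i, j)))) huv
      simp only [uvec, PiLp.toLp_apply, Sum.elim_inl, Sum.elim_inr] at h1 h2
      exact Complex.ext h1 h2
    · rintro rfl
      simp
  · intro ρ σ hρ hσ tρ tσ
    rw [CG, CG, sG, sG, trace_mul_comm, mul_comm (Real.sqrt (1 - (trace (ρ * ρ)).re))]
  · intro ρ σ τ hρ hσ hτ tρ tσ tτ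
    rw [CG_eq_norm hρ hτ tρ tτ, CG_eq_norm hρ hσ tρ tσ, CG_eq_norm hσ hτ tσ tτ,
      ← add_div]
    gcongr <;>
      first
        | positivity
        | exact norm_sub_le_norm_sub_add_norm_sub _ _ _
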